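/- Let k ≥ 2, 2 ≤ ℓ ≤ k, let M_1, …, M_ℓ be pairwise disjoint k-sets, and let a = (a_1 ≥ a_2 ≥ ⋯ ≥ a_ℓ ≥ 1) be a composition with a_1 + ⋯ + a_ℓ = k. Then there exists a covering of {M_1,…,M_ℓ} all of whose edges are of type a; i.e., there exist pairwise disjoint k-sets C_1, …, C_ℓ with ∪C_i = ∪M_i, such that for each i the multiset {|C_i ∩ M_1|, …, |C_i ∩ M_ℓ|} equals {a_1, …, a_ℓ}. -/

import Mathlib

open Finset

lemma exists_partition {α : Type*} [DecidableEq α] :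
    ∀ (n : ℕ) (b : Fin n → ℕ) (S : Finset α), S.card = ∑ i, b i →
    ∃ P : Fin n → Finset α, (∀ i, (P i).card = b i) ∧
      (∀ i j, i ≠ j → Disjoint (P i) (P j)) ∧ Finset.univ.biUnion P = S := by
  intro n
  induction n with
  | zero =>
    intro b S h
    have hS : S = ∅ := Finset.card_eq_zero.mp (by simpa using h)
    exact ⟨fun i => ∅, fun i => i.elim0, fun i => i.elim0, by simp [hS]⟩
  | succ n ih =>
    intro b S h
    rw [Fin.sum_univ_succ] at h
    obtain ⟨T, hTS, hTcard⟩ := Finset.exists_subset_card_eq (show b 0 ≤ S.card by omega)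
    have hrest : (S \ T).card = ∑ i : Fin n, b i.succ := by
      rw [Finset.card_sdiff_of_subset hTS]; omega
    obtain ⟨P', hP'card, hP'disj, hP'union⟩ := ih (fun i => b i.succ) (S \ T) hrest
    have hP'sub : ∀ i, P' i ⊆ S \ T := fun i => hP'union ▸ Finset.subset_biUnion_of_mem P' (mem_univ i)
    refine ⟨Fin.cases T P', ?_, ?_, ?_⟩
    · intro i
      refine Fin.cases ?_ ?_ i
      · simpa using hTcard
      · intro j; simpa using hP'card j
    · intro i j hij
      rcases Fin.eq_zero_or_eq_succ i with rfl | ⟨i', rfl⟩ <;>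
        rcases Fin.eq_zero_or_eq_succ j with rfl | ⟨j', rfl⟩
      · exact absurd rfl hij
      · simp only [Fin.cases_zero, Fin.cases_succ]
        exact Finset.disjoint_left.mpr fun x hx hx' =>
          (Finset.mem_sdiff.mp (hP'sub j' hx')).2 hx
      · simp only [Fin.cases_zero, Fin.cases_succ]
        exact Finset.disjoint_left.mpr fun x hx hx' =>
          (Finset.mem_sdiff.mp (hP'sub i' hx)).2 hx'
      · simp only [Fin.cases_succ]
        exact hP'disj i' j' (by simpa using hij)
    · ext x
      simp only [mem_biUnion, mem_univ, true_and]
      constructor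
      · rintro ⟨i, hi⟩
        refine Fin.cases ?_ ?_ i hi
        · exact fun h => hTS h
        · intro j hj
          exact (Finset.mem_sdiff.mp (hP'sub j hj)).1
      · intro hx
        by_cases hxT : x ∈ T
        · exact ⟨0, hxT⟩
        · have : x ∈ Finset.univ.biUnion P' := hP'union ▸ Finset.mem_sdiff.mpr ⟨hx, hxT⟩
          obtain ⟨j, _, hj⟩ := Finset.mem_biUnion.mp this
          exact ⟨j.succ, hj⟩

theorem stmt_6 {α : Type*} [DecidableEq α] (k l : ℕ) (hk : 2 ≤ k) (hl : 2 ≤ l) (hlk : l ≤ k)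
    (M : Fin l → Finset α)
    (hdisj : ∀ i j, i ≠ j → Disjoint (M i) (M j))
    (hcard : ∀ i, (M i).card = k)
    (a : Fin l → ℕ)
    (hmono : ∀ i j : Fin l, i ≤ j → a j ≤ a i)
    (hpos : ∀ i, 1 ≤ a i)
    (hsum : ∑ i, a i = k) :
    ∃ C : Fin l → Finset α,
      (∀ i j, i ≠ j → Disjoint (C i) (C j)) ∧
      (∀ i, (C i).card = k) ∧
      (Finset.univ.biUnion C = Finset.univ.biUnion M) ∧
      (∀ i, ∃ σ : Equiv.Perm (Fin l), ∀ j, (C i ∩ M (σ j)).card = a j) := by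
  haveI : NeZero l := ⟨by omega⟩
  have hsum' : ∀ j : Fin l, (M j).card = ∑ i, a (j - i) := by
    intro j
    rw [hcard j, ← hsum]
    exact (Equiv.sum_comp (Equiv.subLeft j) a).symm
  choose P hPcard hPdisj hPunion using fun j => exists_partition l (fun i => a (j - i)) (M j) (hsum' j)
  have hPsub : ∀ j i, P j i ⊆ M j := fun j i =>
    (hPunion j) ▸ Finset.subset_biUnion_of_mem (P j) (mem_univ i)
  set C : Fin l → Finset α := fun i => Finset.univ.biUnion (fun j => P j i) with hC
  have hCM : ∀ i m, C i ∩ M m = P m i := by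
    intro i m
    ext x
    simp only [hC, mem_inter, mem_biUnion, mem_univ, true_and]
    constructor
    · rintro ⟨⟨j, hj⟩, hm⟩
      rcases eq_or_ne j m with rfl | hne
      · exact hj
      · exact absurd (Finset.mem_inter.mpr ⟨hPsub j i hj, hm⟩)
          (by rw [Finset.disjoint_iff_inter_eq_empty.mp (hdisj j m hne)]; simp)
    · intro hx
      exact ⟨⟨m, hx⟩, hPsub m i hx⟩
  refine ⟨C, ?_, ?_, ?_, ?_⟩
  · intro i i' hii'
    rw [Finset.disjoint_left]
    intro x hx hx'
    simp only [hC, mem_biUnion, mem_univ, true_and] at hx hx'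
    obtain ⟨j, hj⟩ := hx
    obtain ⟨j', hj'⟩ := hx'
    rcases eq_or_ne j j' with rfl | hne
    · exact Finset.disjoint_left.mp (hPdisj j i i' hii') hj hj'
    · exact Finset.disjoint_left.mp (hdisj j j' hne) (hPsub j i hj) (hPsub j' i' hj')
  · intro i
    have : C i = Finset.univ.biUnion (fun j => C i ∩ M j) := by
      ext x
      simp only [mem_biUnion, mem_univ, true_and, mem_inter]
      constructor
      · intro hx
        have : x ∈ Finset.univ.biUnion M := by
          simp only [hC, mem_biUnion, mem_univ, true_and] at hx
          obtain ⟨j, hj⟩ := hx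
          exact Finset.mem_biUnion.mpr ⟨j, mem_univ j, hPsub j i hj⟩
        obtain ⟨j, _, hj⟩ := Finset.mem_biUnion.mp this
        exact ⟨j, hx, hj⟩
      · rintro ⟨j, hx, _⟩; exact hx
    rw [this, Finset.card_biUnion]
    · simp only [hCM]
      rw [show ∑ j, (P j i).card = ∑ j, a (j - i) from Finset.sum_congr rfl fun j _ => hPcard j i]
      rw [← hsum]
      exact Equiv.sum_comp (Equiv.subRight i) a
    · intro j _ j' _ hne
      exact (hdisj j j' hne).mono (inter_subset_right) (inter_subset_right)
  · ext x
    simp only [hC, mem_biUnion, mem_univ, true_and]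
    constructor
    · rintro ⟨i, j, hj⟩
      exact ⟨j, hPsub j i hj⟩
    · rintro ⟨j, hx⟩
      have : x ∈ Finset.univ.biUnion (P j) := (hPunion j).symm ▸ hx
      obtain ⟨i, _, hi⟩ := Finset.mem_biUnion.mp this
      exact ⟨i, j, hi⟩
  · intro i
    refine ⟨Equiv.addRight i, fun j => ?_⟩
    rw [hCM, hPcard]
    congr 1
    show (j + i : Fin l) - i = j
    exact add_sub_cancel_right j i
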